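/- arXiv:2309.04268 — 2 statements merged into one kernel-verified Lean document; each statement's English description precedes it below -/
import Mathlib

section
/- There exist absolute constants C4, C5 > 0 such that for every integer p that is either 1 or a positive even number there is a constant D(p) (depending only on p) with the property that for every integer d ≥ D(p): C4 · p^(−1/2) ≤ Σ_{k=p}^{⌊d^(0.99)⌋} N(d,k) · ν_d(k) ≤ C5 · p^(−1/2). -/
open Real Filter

/-- Distinct eigenvalues (up to constants) of the NTK on the sphere `S^d`:
`ν_d(k) = d^d · k^(k−2) · (k+d)^(−(k+d+1)) · (k² + k·d + d)`. -/
noncomputable def nuNT (d k : ℕ) : ℝ :=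
  (d : ℝ) ^ (d : ℝ) * (k : ℝ) ^ ((k : ℝ) - 2) *
    ((k : ℝ) + (d : ℝ)) ^ (-((k : ℝ) + (d : ℝ) + 1)) *
    ((k : ℝ) ^ 2 + (k : ℝ) * (d : ℝ) + (d : ℝ))

/-- Dimension of the space of spherical harmonics of degree `k` on `S^d ⊆ ℝ^(d+1)`. -/
def Nsph (d k : ℕ) : ℕ :=
  if k = 0 then 1
  else (k + d).choose k - (if 2 ≤ k then (k + d - 2).choose (k - 2) else 0)

/-- `λ_d(0) = 1` and `λ_d(k) = ν_d(k)` for `k ≥ 1`. -/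
noncomputable def lamNT (d k : ℕ) : ℝ := if k = 0 then 1 else nuNT d k


-- Nat identity: (k+d)(k+d-1) * C(k+d-2, k-2) = k(k-1) * C(k+d, k), for k ≥ 2 (k = j+2)
lemma choose_ident (j d : ℕ) :
    (j+d+2) * ((j+d+1) * (j+d).choose j) = (j+2) * ((j+1) * (j+d+2).choose (j+2)) := by
  have h1 := Nat.add_one_mul_choose_eq (j+d) j
  have h2 := Nat.add_one_mul_choose_eq (j+d+1) (j+1)
  -- h1 : (j+d).succ * (j+d).choose j = (j+d+1).choose (j+1) * (j+1)
  -- h2 : (j+d+1).succ * (j+d+1).choose (j+1) = (j+d+2).choose (j+2) * (j+2)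
  calc (j+d+2) * ((j+d+1) * (j+d).choose j) = (j+d+2) * ((j+d+1).choose (j+1) * (j+1)) := by rw [h1]
    _ = (j+1) * ((j+d+1+1) * (j+d+1).choose (j+1)) := by ring
    _ = (j+1) * ((j+d+2).choose (j+2) * (j+2)) := by rw [h2]
    _ = (j+2) * ((j+1) * (j+d+2).choose (j+2)) := by ring


lemma nsph_le_choose (d k : ℕ) (hk : 1 ≤ k) : Nsph d k ≤ (k+d).choose k := by
  unfold Nsph
  rw [if_neg (by omega)]
  exact Nat.sub_le _ _

lemma choose_le_two_nsph (d k : ℕ) (hk : 1 ≤ k) (hd : 2*k ≤ d) (hd2 : 2 ≤ d) :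
    (k+d).choose k ≤ 2 * Nsph d k := by
  unfold Nsph
  rw [if_neg (by omega)]
  rcases Nat.lt_or_ge k 2 with h2 | h2
  · rw [if_neg (by omega)]
    omega
  · rw [if_pos h2]
    obtain ⟨j, rfl⟩ : ∃ j, k = j + 2 := ⟨k - 2, by omega⟩
    rw [show j+2+d = j+d+2 from by omega, show j+d+2-2 = j+d from by omega,
      show j+2-2 = j from by omega]
    have hident := choose_ident j d
    have hle : 2 * ((j+d).choose j) ≤ (j+d+2).choose (j+2) := by
      -- from identity: (j+d+2)(j+d+1) C(j+d,j) = (j+2)(j+1) C(j+d+2,j+2)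
      -- and 2(j+2)(j+1) ≤ (j+d+2)(j+d+1) given 2(j+2) ≤ d
      have key : 2 * ((j+d+2) * ((j+d+1) * (j+d).choose j))
          ≤ (j+d+2) * ((j+d+1) * (j+d+2).choose (j+2)) := by
        rw [hident]
        have hc : 2 * ((j+2) * (j+1)) ≤ (j+d+2) * (j+d+1) := by nlinarith [hd]
        calc 2 * ((j+2) * ((j+1) * (j+d+2).choose (j+2)))
            = (2 * ((j+2)*(j+1))) * (j+d+2).choose (j+2) := by ring
          _ ≤ ((j+d+2) * (j+d+1)) * (j+d+2).choose (j+2) :=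
              Nat.mul_le_mul_right _ hc
          _ = (j+d+2) * ((j+d+1) * (j+d+2).choose (j+2)) := by ring
      have step1 : (j+d+1) * (2 * (j+d).choose j) ≤ (j+d+1) * (j+d+2).choose (j+2) := by
        refine Nat.le_of_mul_le_mul_left ?_ (show 0 < j+d+2 by omega)
        calc (j+d+2) * ((j+d+1) * (2 * (j+d).choose j))
            = 2 * ((j+d+2) * ((j+d+1) * (j+d).choose j)) := by ring
          _ ≤ _ := key
      exact Nat.le_of_mul_le_mul_left step1 (by omega)
    omega


lemma stirling_bounds (n : ℕ) (hn : 1 ≤ n) :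
    √π ≤ Stirling.stirlingSeq n ∧ Stirling.stirlingSeq n ≤ exp 1 / √2 := by
  obtain ⟨m, rfl⟩ := Nat.exists_eq_add_of_le' hn
  constructor
  · exact Stirling.stirlingSeq'_antitone.le_of_tendsto
      (Stirling.tendsto_stirlingSeq_sqrt_pi.comp (tendsto_add_atTop_nat 1)) m
  · have := Stirling.stirlingSeq'_antitone (Nat.zero_le m)
    simpa [Stirling.stirlingSeq_one] using this

lemma fact_lb (n : ℕ) (hn : 1 ≤ n) :
    √π * (√(2*n) * ((n:ℝ)/exp 1)^n) ≤ (Nat.factorial n : ℝ) := by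
  have hden : 0 < √(2*(n:ℝ)) * ((n:ℝ)/exp 1)^n := by
    have : (0:ℝ) < n := by exact_mod_cast hn
    positivity
  have h := (stirling_bounds n hn).1
  rw [Stirling.stirlingSeq, le_div_iff₀ hden] at h
  linarith

lemma fact_ub (n : ℕ) (hn : 1 ≤ n) :
    (Nat.factorial n : ℝ) ≤ (exp 1 / √2) * (√(2*n) * ((n:ℝ)/exp 1)^n) := by
  have hden : 0 < √(2*(n:ℝ)) * ((n:ℝ)/exp 1)^n := by
    have : (0:ℝ) < n := by exact_mod_cast hn
    positivity
  have h := (stirling_bounds n hn).2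
  rw [Stirling.stirlingSeq, div_le_iff₀ hden] at h
  linarith

set_option maxHeartbeats 2000000 in
lemma choose_sandwich (k d : ℕ) (hk : 1 ≤ k) (hkd : k ≤ d) :
    ((k+d).choose k : ℝ) * (√k * (k:ℝ)^k * (d:ℝ)^d) ≤ ((k:ℝ)+d)^(k+d) ∧
    ((k:ℝ)+d)^(k+d) ≤ 4 * ((k+d).choose k : ℝ) * (√k * (k:ℝ)^k * (d:ℝ)^d) := by
  have hd : 1 ≤ d := le_trans hk hkd
  have hK : (0:ℝ) < k := by exact_mod_cast hk
  have hD : (0:ℝ) < d := by exact_mod_cast hd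
  have hKD : (k:ℝ) ≤ d := by exact_mod_cast hkd
  set E := exp 1 with hEdef
  have hE : (0:ℝ) < E := exp_pos 1
  set C := ((k+d).choose k : ℝ) with hCdef
  have hfac : C * ((Nat.factorial k : ℝ) * (Nat.factorial d : ℝ))
      = (Nat.factorial (k+d) : ℝ) := by
    have := Nat.choose_mul_factorial_mul_factorial (Nat.le_add_right k d)
    rw [Nat.add_sub_cancel_left] at this
    have := congrArg (Nat.cast (R := ℝ)) this
    push_cast at this
    rw [hCdef]; push_cast; linarith
  have hC : (0:ℝ) < C := by
    rw [hCdef]; exact_mod_cast Nat.choose_pos (Nat.le_add_right k d)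
  have hsk : (0:ℝ) < √k := Real.sqrt_pos.2 hK
  have hsd : (0:ℝ) < √d := Real.sqrt_pos.2 hD
  have hkl := fact_lb k hk
  have hdl := fact_lb d hd
  have hku := fact_ub k hk
  have hdu := fact_ub d hd
  have hnl := fact_lb (k+d) (by omega)
  have hnu := fact_ub (k+d) (by omega)
  push_cast at hnl hnu
  have hpow : ((k:ℝ)/E)^k * ((d:ℝ)/E)^d * E^(k+d) = (k:ℝ)^k * (d:ℝ)^d := by
    rw [div_pow, div_pow, pow_add]
    field_simp
  have hpow2 : (((k:ℝ)+d)/E)^(k+d) * E^(k+d) = ((k:ℝ)+d)^(k+d) := by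
    rw [div_pow]
    field_simp
  have hs2k : √(2*(k:ℝ)) = √2 * √k := Real.sqrt_mul (by norm_num) _
  have hs2d : √(2*(d:ℝ)) = √2 * √d := Real.sqrt_mul (by norm_num) _
  have hs2n : √(2*((k:ℝ)+d)) = √2 * √((k:ℝ)+d) := Real.sqrt_mul (by norm_num) _
  have hππ : √π * √π = π := Real.mul_self_sqrt pi_pos.le
  have h22 : √2 * √2 = (2:ℝ) := Real.mul_self_sqrt (by norm_num)
  have hs2ne : √2 ≠ 0 := by positivity
  have hsn_le : √((k:ℝ)+d) ≤ √2 * √d := by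
    have h1 : √((k:ℝ)+d) ≤ √(2*(d:ℝ)) := Real.sqrt_le_sqrt (by linarith)
    rwa [hs2d] at h1
  have hds : √(d:ℝ) ≤ √((k:ℝ)+d) := Real.sqrt_le_sqrt (by linarith)
  have hs15 : √(2:ℝ) < 1.5 := by
    nlinarith [Real.sq_sqrt (by norm_num : (0:ℝ) ≤ 2), Real.sqrt_nonneg 2]
  have hsplb : (1.7:ℝ) ≤ √π := by
    apply Real.le_sqrt_of_sq_le
    nlinarith [pi_gt_three]
  have hs2lb : (1.2:ℝ) ≤ √2 := by
    apply Real.le_sqrt_of_sq_le; norm_num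
  have heub : E < 2.7182818286 := exp_one_lt_d9
  -- UPPER BOUND --------------------------------------------------------
  have h1 : C * ((√π * (√(2*(k:ℝ)) * ((k:ℝ)/E)^k)) * (√π * (√(2*(d:ℝ)) * ((d:ℝ)/E)^d)))
      ≤ (Nat.factorial (k+d) : ℝ) := by
    rw [← hfac]
    have hx : (0:ℝ) ≤ √π * (√(2*(k:ℝ)) * ((k:ℝ)/E)^k) := by positivity
    gcongr
  have hU1 : C * (2*π) * ((√k*√d) * (((k:ℝ)/E)^k*((d:ℝ)/E)^d))
      ≤ (E * √((k:ℝ)+d)) * ((((k:ℝ)+d)/E)^(k+d)) := by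
    have heq1 : C * ((√π * (√(2*(k:ℝ)) * ((k:ℝ)/E)^k)) * (√π * (√(2*(d:ℝ)) * ((d:ℝ)/E)^d)))
        = C * (2*π) * ((√k*√d) * (((k:ℝ)/E)^k*((d:ℝ)/E)^d)) := by
      rw [hs2k, hs2d]
      linear_combination (C*√↑k*√↑d*(((k:ℝ)/E)^k)*(((d:ℝ)/E)^d)*(√π*√π)) * h22
        + (2*C*√↑k*√↑d*(((k:ℝ)/E)^k)*(((d:ℝ)/E)^d)) * hππ
    have heq2 : (E/√2) * (√(2*((k:ℝ)+d)) * ((((k:ℝ)+d)/E)^(k+d)))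
        = (E * √((k:ℝ)+d)) * ((((k:ℝ)+d)/E)^(k+d)) := by
      rw [hs2n]; field_simp
    rw [← heq1, ← heq2]
    exact h1.trans hnu
  have hU2 : C * (2*π) * (√k*√d) * ((k:ℝ)^k*(d:ℝ)^d)
      ≤ E * √((k:ℝ)+d) * ((k:ℝ)+d)^(k+d) := by
    have h := mul_le_mul_of_nonneg_right hU1 (le_of_lt (pow_pos hE (k+d)))
    calc C * (2*π) * (√k*√d) * ((k:ℝ)^k*(d:ℝ)^d)
        = C * (2*π) * (√k*√d) * (((k:ℝ)/E)^k*((d:ℝ)/E)^d * E^(k+d)) := by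
          rw [show ((k:ℝ)/E)^k*((d:ℝ)/E)^d * E^(k+d) = (k:ℝ)^k * (d:ℝ)^d from hpow]
      _ = C * (2*π) * ((√k*√d) * (((k:ℝ)/E)^k*((d:ℝ)/E)^d)) * E^(k+d) := by ring
      _ ≤ (E * √((k:ℝ)+d)) * ((((k:ℝ)+d)/E)^(k+d)) * E^(k+d) := h
      _ = E * √((k:ℝ)+d) * ((((k:ℝ)+d)/E)^(k+d) * E^(k+d)) := by ring
      _ = E * √((k:ℝ)+d) * ((k:ℝ)+d)^(k+d) := by rw [hpow2]
  have hnum : E * √2 ≤ 2*π := by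
    have h1 : E * √2 ≤ 2.7182818286 * √2 := by
      apply mul_le_mul_of_nonneg_right heub.le (Real.sqrt_nonneg 2)
    have h2 : (2.7182818286:ℝ) * √2 ≤ 2.7182818286 * 1.5 := by nlinarith
    have h3 := pi_gt_d6
    nlinarith
  have hEs : E * √((k:ℝ)+d) ≤ 2*π*√d := by
    calc E * √((k:ℝ)+d) ≤ E * (√2*√d) := by
          apply mul_le_mul_of_nonneg_left hsn_le hE.le
      _ = (E*√2)*√d := by ring
      _ ≤ (2*π)*√d := mul_le_mul_of_nonneg_right hnum (Real.sqrt_nonneg d)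
      _ = 2*π*√d := by ring
  have hUfin : C * (√k * (k:ℝ)^k * (d:ℝ)^d) ≤ ((k:ℝ)+d)^(k+d) := by
    have hcancel : C * (√k*(k:ℝ)^k*(d:ℝ)^d) * (2*π*√d) ≤ ((k:ℝ)+d)^(k+d) * (2*π*√d) := by
      calc C * (√k*(k:ℝ)^k*(d:ℝ)^d) * (2*π*√d)
          = C*(2*π)*(√k*√d)*((k:ℝ)^k*(d:ℝ)^d) := by ring
        _ ≤ E*√((k:ℝ)+d)*((k:ℝ)+d)^(k+d) := hU2
        _ ≤ (2*π*√d)*((k:ℝ)+d)^(k+d) := by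
            apply mul_le_mul_of_nonneg_right hEs (by positivity)
        _ = ((k:ℝ)+d)^(k+d)*(2*π*√d) := by ring
    exact le_of_mul_le_mul_right hcancel (by positivity)
  -- LOWER BOUND --------------------------------------------------------
  have h1L : (Nat.factorial (k+d) : ℝ)
      ≤ C * (((E/√2) * (√(2*(k:ℝ)) * ((k:ℝ)/E)^k)) * ((E/√2) * (√(2*(d:ℝ)) * ((d:ℝ)/E)^d))) := by
    rw [← hfac]
    have hx : (0:ℝ) ≤ (Nat.factorial k : ℝ) := by positivity
    gcongr
  have hL1 : √π * (√2 * √((k:ℝ)+d)) * ((((k:ℝ)+d)/E)^(k+d))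
      ≤ C * (E^2) * ((√k*√d) * (((k:ℝ)/E)^k*((d:ℝ)/E)^d)) := by
    have heq1 : C * (((E/√2) * (√(2*(k:ℝ)) * ((k:ℝ)/E)^k)) * ((E/√2) * (√(2*(d:ℝ)) * ((d:ℝ)/E)^d)))
        = C * (E^2) * ((√k*√d) * (((k:ℝ)/E)^k*((d:ℝ)/E)^d)) := by
      rw [hs2k, hs2d]; field_simp
    have heq2 : √π * (√(2*((k:ℝ)+d)) * ((((k:ℝ)+d)/E)^(k+d)))
        = √π * (√2 * √((k:ℝ)+d)) * ((((k:ℝ)+d)/E)^(k+d)) := by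
      rw [hs2n]; ring
    rw [← heq1, ← heq2]
    exact hnl.trans h1L
  have hL2 : √π * (√2 * √((k:ℝ)+d)) * ((k:ℝ)+d)^(k+d)
      ≤ C * (E^2) * (√k*√d) * ((k:ℝ)^k*(d:ℝ)^d) := by
    have h := mul_le_mul_of_nonneg_right hL1 (le_of_lt (pow_pos hE (k+d)))
    calc √π * (√2 * √((k:ℝ)+d)) * ((k:ℝ)+d)^(k+d)
        = √π * (√2 * √((k:ℝ)+d)) * ((((k:ℝ)+d)/E)^(k+d) * E^(k+d)) := by rw [hpow2]
      _ = √π * (√2 * √((k:ℝ)+d)) * ((((k:ℝ)+d)/E)^(k+d)) * E^(k+d) := by ring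
      _ ≤ C * (E^2) * ((√k*√d) * (((k:ℝ)/E)^k*((d:ℝ)/E)^d)) * E^(k+d) := h
      _ = C * (E^2) * (√k*√d) * (((k:ℝ)/E)^k*((d:ℝ)/E)^d * E^(k+d)) := by ring
      _ = C * (E^2) * (√k*√d) * ((k:ℝ)^k*(d:ℝ)^d) := by rw [hpow]
  have hnum2 : E^2 ≤ 4*(√π*√2) := by
    nlinarith [hsplb, hs2lb, heub, hE.le]
  have hLfin : ((k:ℝ)+d)^(k+d) ≤ 4 * C * (√k * (k:ℝ)^k * (d:ℝ)^d) := by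
    have hcancel : ((k:ℝ)+d)^(k+d) * (√π*√2*√d)
        ≤ 4 * C * (√k * (k:ℝ)^k * (d:ℝ)^d) * (√π*√2*√d) := by
      calc ((k:ℝ)+d)^(k+d) * (√π*√2*√d)
          = √π * (√2 * √d) * ((k:ℝ)+d)^(k+d) := by ring
        _ ≤ √π * (√2 * √((k:ℝ)+d)) * ((k:ℝ)+d)^(k+d) := by
            have : (0:ℝ) ≤ ((k:ℝ)+d)^(k+d) := by positivity
            have h2 : √π * (√2 * √d) ≤ √π * (√2 * √((k:ℝ)+d)) := by
              have := mul_le_mul_of_nonneg_left hds (by positivity : (0:ℝ) ≤ √π*√2)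
              calc √π * (√2 * √d) = √π*√2*√d := by ring
                _ ≤ √π*√2*√((k:ℝ)+d) := this
                _ = √π * (√2 * √((k:ℝ)+d)) := by ring
            exact mul_le_mul_of_nonneg_right h2 this
        _ ≤ C * (E^2) * (√k*√d) * ((k:ℝ)^k*(d:ℝ)^d) := hL2
        _ = (C * √k * ((k:ℝ)^k*(d:ℝ)^d) * √d) * E^2 := by ring
        _ ≤ (C * √k * ((k:ℝ)^k*(d:ℝ)^d) * √d) * (4*(√π*√2)) := by
            apply mul_le_mul_of_nonneg_left hnum2 (by positivity)
        _ = 4 * C * (√k * (k:ℝ)^k * (d:ℝ)^d) * (√π*√2*√d) := by ring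
    exact le_of_mul_le_mul_right hcancel (by positivity)
  exact ⟨hUfin, hLfin⟩


lemma nuNT_eq (d k : ℕ) (hk : 1 ≤ k) (hd : 1 ≤ d) :
    nuNT d k = ((d:ℝ)^d * (k:ℝ)^k * ((k:ℝ)^2+(k:ℝ)*(d:ℝ)+(d:ℝ)))
      / ((k:ℝ)^2 * ((k:ℝ)+(d:ℝ))^(k+d+1)) := by
  have hK : (0:ℝ) < k := by exact_mod_cast hk
  have hD : (0:ℝ) < d := by exact_mod_cast hd
  unfold nuNT
  rw [Real.rpow_sub hK]
  rw [show -((k:ℝ)+(d:ℝ)+1) = -(((k+d+1:ℕ):ℝ)) by push_cast; ring]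
  rw [Real.rpow_neg (by positivity), Real.rpow_natCast, Real.rpow_natCast,
    Real.rpow_natCast, show ((2:ℝ)) = ((2:ℕ):ℝ) by norm_num, Real.rpow_natCast]
  have h1 : ((k:ℝ)+(d:ℝ))^(k+d+1) ≠ 0 := by positivity
  have h2 : (k:ℝ)^(2:ℕ) ≠ 0 := by positivity
  field_simp

-- telescoping step
lemma telescope_step (m : ℕ) (hm : 1 ≤ m) :
    ((m:ℝ)*√m)⁻¹ ≤ 6*((√(m:ℝ))⁻¹ - (√((m:ℝ)+1))⁻¹) := by
  set s := √(m:ℝ) with hsdef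
  set t := √((m:ℝ)+1) with htdef
  have hm0 : (0:ℝ) ≤ m := by positivity
  have hss : s*s = (m:ℝ) := Real.mul_self_sqrt hm0
  have htt : t*t = (m:ℝ)+1 := Real.mul_self_sqrt (by linarith)
  have hs1 : (1:ℝ) ≤ s := by
    apply Real.le_sqrt_of_sq_le; exact_mod_cast hm
  have hs0 : (0:ℝ) < s := by linarith
  have ht0 : (0:ℝ) < t := Real.sqrt_pos.2 (by linarith)
  have key : s*t*(s+t) ≤ 6*((m:ℝ)*s) := by
    nlinarith [sq_nonneg (t - 2*s), hss, htt, hs1, ht0.le, hs0.le,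
      mul_pos hs0 ht0]
  have hdiff : t - s = 1/(t+s) := by
    rw [eq_div_iff (by positivity)]
    nlinarith [hss, htt]
  have heq : 6*(s⁻¹ - t⁻¹) = 6/((t+s)*(s*t)) := by
    rw [inv_eq_one_div, inv_eq_one_div, div_sub_div _ _ (ne_of_gt hs0) (ne_of_gt ht0)]
    rw [show (1:ℝ)*t - s*1 = t - s by ring, hdiff]
    field_simp
  rw [heq, inv_eq_one_div, div_le_div_iff₀ (by positivity) (by positivity)]
  nlinarith [key]

lemma sum_ub (p : ℕ) (hp : 1 ≤ p) (M : ℕ) :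
    ∑ k ∈ Finset.Icc p M, ((k:ℝ)*√k)⁻¹ ≤ 6*(√(p:ℝ))⁻¹ := by
  have hsp : (0:ℝ) < √p := Real.sqrt_pos.2 (by exact_mod_cast hp)
  rcases Nat.lt_or_ge M p with h | h
  · rw [Finset.Icc_eq_empty (by omega)]
    simp
  · obtain ⟨n, rfl⟩ := Nat.exists_eq_add_of_le h
    have aux : ∀ n : ℕ, ∑ k ∈ Finset.Icc p (p+n), ((k:ℝ)*√k)⁻¹
        ≤ 6*(√(p:ℝ))⁻¹ - 6*(√((p:ℝ)+n+1))⁻¹ := by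
      intro n
      induction n with
      | zero =>
        rw [show p + 0 = p from rfl, Finset.Icc_self, Finset.sum_singleton]
        have := telescope_step p hp
        push_cast
        norm_num
        push_cast at this
        rw [mul_inv] at this
        linarith
      | succ n ih =>
        rw [show p + (n+1) = (p+n) + 1 from rfl,
          Finset.sum_Icc_succ_top (by omega)]
        have hstep := telescope_step (p+n+1) (by omega)
        push_cast at hstep ih ⊢
        have e1 : (p:ℝ) + n + 1 = (p:ℝ) + (n+1) := by ring
        rw [show (p:ℝ)+(n+1)+1 = ((p:ℝ)+n+1)+1 by ring]
        linarith
    have := aux n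
    have h2 : (0:ℝ) ≤ 6*(√((p:ℝ)+n+1))⁻¹ := by positivity
    linarith

lemma sum_lb (p : ℕ) (hp : 1 ≤ p) :
    (1/4)*(√(p:ℝ))⁻¹ ≤ ∑ k ∈ Finset.Icc p (2*p), ((k:ℝ)*√k)⁻¹ := by
  have hp0 : (0:ℝ) < p := by exact_mod_cast hp
  have hsp : (0:ℝ) < √p := Real.sqrt_pos.2 hp0
  have hb : (0:ℝ) < ((2*p:ℕ):ℝ)*√((2*p:ℕ):ℝ) := by
    have : (0:ℝ) < ((2*p:ℕ):ℝ) := by exact_mod_cast Nat.mul_pos (by norm_num) hp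
    positivity
  have hterm : ∀ k ∈ Finset.Icc p (2*p), (((2*p:ℕ):ℝ)*√((2*p:ℕ):ℝ))⁻¹ ≤ ((k:ℝ)*√k)⁻¹ := by
    intro k hk
    rw [Finset.mem_Icc] at hk
    have hk0 : (0:ℝ) < k := by
      have : 1 ≤ k := le_trans hp hk.1
      exact_mod_cast this
    have hk2 : (k:ℝ) ≤ ((2*p:ℕ):ℝ) := by exact_mod_cast hk.2
    apply inv_anti₀ (by positivity)
    exact mul_le_mul hk2 (Real.sqrt_le_sqrt hk2) (Real.sqrt_nonneg _) (by positivity)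
  have hcard : (Finset.Icc p (2*p)).card = p + 1 := by
    rw [Nat.card_Icc]; omega
  have hsum := Finset.card_nsmul_le_sum (Finset.Icc p (2*p)) _ _ hterm
  rw [hcard] at hsum
  have hsmul : ((p+1) : ℕ) • ((((2*p:ℕ):ℝ))*√((2*p:ℕ):ℝ))⁻¹
      = ((p:ℝ)+1) * ((((2*p:ℕ):ℝ))*√((2*p:ℕ):ℝ))⁻¹ := by
    rw [nsmul_eq_mul]; push_cast; ring
  rw [hsmul] at hsum
  -- (2p)√(2p) = 2p √2 √p ≤ 3 p √p
  have hs2 : √((2*p:ℕ):ℝ) = √2 * √p := by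
    push_cast
    rw [← Real.sqrt_mul (by norm_num)]
  have hs15 : √(2:ℝ) < 1.5 := by
    nlinarith [Real.sq_sqrt (by norm_num : (0:ℝ) ≤ 2), Real.sqrt_nonneg 2]
  have hineq : (((2*p:ℕ):ℝ))*√((2*p:ℕ):ℝ) ≤ 3*((p:ℝ)*√p) := by
    rw [hs2]
    push_cast
    have h5 : √2*(2*(p:ℝ)*√p) ≤ 1.5*(2*(p:ℝ)*√p) :=
      mul_le_mul_of_nonneg_right hs15.le (by positivity)
    nlinarith [h5]
  have hfin : (1/4)*(√(p:ℝ))⁻¹ ≤ ((p:ℝ)+1) * ((((2*p:ℕ):ℝ))*√((2*p:ℕ):ℝ))⁻¹ := by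
    have h3 : ((((2*p:ℕ):ℝ))*√((2*p:ℕ):ℝ))⁻¹ ≥ (3*((p:ℝ)*√p))⁻¹ :=
      inv_anti₀ (by positivity) hineq
    have h4 : ((p:ℝ)+1) * (3*((p:ℝ)*√p))⁻¹ ≥ (1/4)*(√(p:ℝ))⁻¹ := by
      rw [ge_iff_le]
      have e1 : (1/4)*(√(p:ℝ))⁻¹ = 1/(4*√(p:ℝ)) := by field_simp
      have e2 : ((p:ℝ)+1)*(3*((p:ℝ)*√p))⁻¹ = ((p:ℝ)+1)/(3*((p:ℝ)*√p)) := by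
        rw [div_eq_mul_inv]
      rw [e1, e2, div_le_div_iff₀ (by positivity) (by positivity)]
      nlinarith [hp0, hsp, Real.sq_sqrt hp0.le, mul_pos hp0 hsp]
    calc (1/4)*(√(p:ℝ))⁻¹ ≤ ((p:ℝ)+1) * (3*((p:ℝ)*√p))⁻¹ := h4
      _ ≤ ((p:ℝ)+1) * ((((2*p:ℕ):ℝ))*√((2*p:ℕ):ℝ))⁻¹ := by
          apply mul_le_mul_of_nonneg_left h3 (by positivity)
  linarith


set_option maxHeartbeats 1000000 in
lemma term_bounds (d k : ℕ) (hk : 1 ≤ k) (hdk : 2*k ≤ d) :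
    (1/16) * ((k:ℝ)*√k)⁻¹ ≤ (Nsph d k : ℝ) * nuNT d k ∧
    (Nsph d k : ℝ) * nuNT d k ≤ 3 * ((k:ℝ)*√k)⁻¹ := by
  have hkd : k ≤ d := by omega
  have hd2 : 2 ≤ d := by omega
  have hd1 : 1 ≤ d := by omega
  have hK : (0:ℝ) < k := by exact_mod_cast hk
  have hD : (0:ℝ) < d := by exact_mod_cast hd1
  have hKD : (k:ℝ) ≤ d := by exact_mod_cast hkd
  obtain ⟨hU, hL⟩ := choose_sandwich k d hk hkd
  have hnu := nuNT_eq d k hk hd1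
  rw [hnu, show ((k:ℝ)+(d:ℝ))^(k+d+1) = ((k:ℝ)+(d:ℝ))^(k+d) * ((k:ℝ)+(d:ℝ)) from pow_succ _ _]
  set C := ((k+d).choose k : ℝ) with hCdef
  have hC : (0:ℝ) < C := by
    rw [hCdef]; exact_mod_cast Nat.choose_pos (Nat.le_add_right k d)
  have hNle : (Nsph d k : ℝ) ≤ C := by
    rw [hCdef]; exact_mod_cast nsph_le_choose d k hk
  have hCle : C ≤ 2*(Nsph d k : ℝ) := by
    rw [hCdef]
    exact_mod_cast choose_le_two_nsph d k hk hdk hd2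
  have hN0 : (0:ℝ) < (Nsph d k : ℝ) := by linarith
  set s := √(k:ℝ) with hsdef
  have hs : 0 < s := Real.sqrt_pos.2 hK
  have hss : s*s = (k:ℝ) := Real.mul_self_sqrt hK.le
  set P := (k:ℝ)^k with hPdef
  set Q := (d:ℝ)^d with hQdef
  set X := ((k:ℝ)+(d:ℝ))^(k+d) with hXdef
  have hP : (0:ℝ) < P := pow_pos hK k
  have hQ : (0:ℝ) < Q := pow_pos hD d
  have hX : (0:ℝ) < X := pow_pos (by linarith) _
  set A := (k:ℝ)^2+(k:ℝ)*(d:ℝ)+(d:ℝ) with hAdef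
  have hA1 : (k:ℝ)*d ≤ A := by rw [hAdef]; nlinarith [sq_nonneg (k:ℝ), hD]
  have hA2 : A ≤ 3*((k:ℝ)*d) := by
    rw [hAdef]
    have h1 : (k:ℝ)*(k:ℝ) ≤ (k:ℝ)*(d:ℝ) := mul_le_mul_of_nonneg_left hKD hK.le
    have h2 : (d:ℝ) ≤ (k:ℝ)*(d:ℝ) := by
      nlinarith [mul_le_mul_of_nonneg_right (show (1:ℝ) ≤ k by exact_mod_cast hk) hD.le]
    nlinarith [h1, h2]
  have hA0 : (0:ℝ) < A := lt_of_lt_of_le (by positivity) hA1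
  have hkd2 : (0:ℝ) < (k:ℝ)+(d:ℝ) := by linarith
  constructor
  · -- LOWER
    have e0 : (Nsph d k : ℝ) * ((Q*P*A)/((k:ℝ)^2*(X*((k:ℝ)+(d:ℝ)))))
        = ((Nsph d k : ℝ)*(Q*P*A))/((k:ℝ)^2*(X*((k:ℝ)+(d:ℝ)))) := by ring
    rw [e0]
    have e1 : (1/16:ℝ)*((k:ℝ)*s)⁻¹ = 1/(16*((k:ℝ)*s)) := by
      rw [one_div, mul_inv, one_div]
      ring
    rw [e1, div_le_div_iff₀ (by positivity) (by positivity)]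
    calc 1*((k:ℝ)^2*(X*((k:ℝ)+(d:ℝ))))
        = (k:ℝ)^2*(X*((k:ℝ)+(d:ℝ))) := by ring
      _ ≤ (k:ℝ)^2*((4*C*(s*P*Q))*((k:ℝ)+(d:ℝ))) := by
          apply mul_le_mul_of_nonneg_left
            (mul_le_mul_of_nonneg_right hL (by positivity)) (by positivity)
      _ ≤ (k:ℝ)^2*((4*C*(s*P*Q))*(2*(d:ℝ))) := by
          have h3 : (k:ℝ)+(d:ℝ) ≤ 2*(d:ℝ) := by linarith
          have h4 : (0:ℝ) ≤ 4*C*(s*P*Q) := by positivity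
          apply mul_le_mul_of_nonneg_left
            (mul_le_mul_of_nonneg_left h3 h4) (by positivity)
      _ = (C*(s*P*Q))*(8*(k:ℝ)^2*(d:ℝ)) := by ring
      _ ≤ ((2*(Nsph d k : ℝ))*(s*P*Q))*(8*(k:ℝ)^2*(d:ℝ)) := by
          apply mul_le_mul_of_nonneg_right
            (mul_le_mul_of_nonneg_right hCle (by positivity)) (by positivity)
      _ = ((Nsph d k : ℝ)*(Q*P*((k:ℝ)*(d:ℝ))))*(16*((k:ℝ)*s)) := by
          rw [← hss]; ring
      _ ≤ ((Nsph d k : ℝ)*(Q*P*A))*(16*((k:ℝ)*s)) := by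
          have h5 : Q*P*((k:ℝ)*(d:ℝ)) ≤ Q*P*A :=
            mul_le_mul_of_nonneg_left hA1 (by positivity)
          apply mul_le_mul_of_nonneg_right
            (mul_le_mul_of_nonneg_left h5 hN0.le) (by positivity)
  · -- UPPER
    have e0 : (Nsph d k : ℝ) * ((Q*P*A)/((k:ℝ)^2*(X*((k:ℝ)+(d:ℝ)))))
        = ((Nsph d k : ℝ)*(Q*P*A))/((k:ℝ)^2*(X*((k:ℝ)+(d:ℝ)))) := by ring
    rw [e0]
    have e1 : (3:ℝ)*((k:ℝ)*s)⁻¹ = 3/((k:ℝ)*s) := by rw [div_eq_mul_inv]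
    rw [e1, div_le_div_iff₀ (by positivity) (by positivity)]
    calc ((Nsph d k : ℝ)*(Q*P*A))*((k:ℝ)*s)
        ≤ (C*(Q*P*A))*((k:ℝ)*s) := by
          apply mul_le_mul_of_nonneg_right
            (mul_le_mul_of_nonneg_right hNle (by positivity)) (by positivity)
      _ = (C*(s*P*Q))*(A*(k:ℝ)) := by ring
      _ ≤ X*(A*(k:ℝ)) := mul_le_mul_of_nonneg_right hU (by positivity)
      _ ≤ X*((3*((k:ℝ)*(d:ℝ)))*(k:ℝ)) := by
          apply mul_le_mul_of_nonneg_left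
            (mul_le_mul_of_nonneg_right hA2 hK.le) hX.le
      _ = 3*((k:ℝ)^2*(X*(d:ℝ))) := by ring
      _ ≤ 3*((k:ℝ)^2*(X*((k:ℝ)+(d:ℝ)))) := by
          have h6 : X*(d:ℝ) ≤ X*((k:ℝ)+(d:ℝ)) :=
            mul_le_mul_of_nonneg_left (by linarith) hX.le
          nlinarith [mul_le_mul_of_nonneg_left h6 (sq_nonneg (k:ℝ))]


set_option maxRecDepth 8000 in
set_option maxHeartbeats 1000000 in
/-- Absolute constants C4, C5 > 0 such that for every p that is 1 or positive even and all
large d: C4·p^(−1/2) ≤ Σ_{k=p}^{⌊d^0.99⌋} N(d,k)·ν_d(k) ≤ C5·p^(−1/2). -/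
theorem sum_Nsph_mul_nuNT_middle_bounds :
    ∃ C4 C5 : ℝ, 0 < C4 ∧ 0 < C5 ∧
      ∀ p : ℕ, (p = 1 ∨ (Even p ∧ 0 < p)) → ∃ D : ℕ, ∀ d : ℕ, D ≤ d →
        C4 * (p : ℝ) ^ (-(1 / 2 : ℝ)) ≤
            ∑ k ∈ Finset.Icc p ⌊(d : ℝ) ^ (0.99 : ℝ)⌋₊, (Nsph d k : ℝ) * nuNT d k ∧
        ∑ k ∈ Finset.Icc p ⌊(d : ℝ) ^ (0.99 : ℝ)⌋₊, (Nsph d k : ℝ) * nuNT d k ≤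
            C5 * (p : ℝ) ^ (-(1 / 2 : ℝ)) := by
  refine ⟨1/64, 18, by norm_num, by norm_num, ?_⟩
  intro p hp
  have hp1 : 1 ≤ p := by rcases hp with h | ⟨_, h⟩ <;> omega
  refine ⟨max (2^100) ((2*p+1)^2), ?_⟩
  intro d hd
  have hd1 : 2^100 ≤ d := le_trans (le_max_left _ _) hd
  have hd2 : (2*p+1)^2 ≤ d := le_trans (le_max_right _ _) hd
  have hd1' : 1 ≤ d := by
    have : (1:ℕ) ≤ 2^100 := Nat.one_le_two_pow
    omega
  have hp0 : (0:ℝ) < p := by exact_mod_cast hp1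
  have hsp : (0:ℝ) < √p := Real.sqrt_pos.2 hp0
  have hD0 : (0:ℝ) < d := by exact_mod_cast hd1'
  have hD1 : (1:ℝ) ≤ d := by exact_mod_cast hd1'
  set M := ⌊(d:ℝ)^(0.99:ℝ)⌋₊ with hMdef
  have hfloor : (M:ℝ) ≤ (d:ℝ)^(0.99:ℝ) := Nat.floor_le (by positivity)
  have hd001 : (2:ℝ) ≤ (d:ℝ)^(0.01:ℝ) := by
    have hcast : ((2:ℝ)^(100:ℕ)) ≤ (d:ℝ) := by exact_mod_cast hd1
    have h1 : ((2:ℝ)^(100:ℕ))^(0.01:ℝ) ≤ (d:ℝ)^(0.01:ℝ) :=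
      Real.rpow_le_rpow (by positivity) hcast (by norm_num)
    have h2 : ((2:ℝ)^(100:ℕ))^(0.01:ℝ) = 2 := by
      rw [← Real.rpow_natCast 2 100, ← Real.rpow_mul (by norm_num)]
      norm_num
    linarith
  have hsplit : (d:ℝ)^(0.99:ℝ) * (d:ℝ)^(0.01:ℝ) = d := by
    rw [← Real.rpow_add hD0]; norm_num
  have h2M : 2*(d:ℝ)^(0.99:ℝ) ≤ d := by
    nlinarith [Real.rpow_nonneg hD0.le (0.99:ℝ), hd001, hsplit]
  have hMd : 2*M ≤ d := by
    have : (2*(M:ℝ)) ≤ (d:ℝ) := by nlinarith [hfloor]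
    exact_mod_cast this
  have hdsq : ((2*p+1:ℕ):ℝ) ≤ √(d:ℝ) := by
    apply Real.le_sqrt_of_sq_le; exact_mod_cast hd2
  have hsq99 : √(d:ℝ) ≤ (d:ℝ)^(0.99:ℝ) := by
    rw [Real.sqrt_eq_rpow]
    exact Real.rpow_le_rpow_of_exponent_le hD1 (by norm_num)
  have hpM : 2*p ≤ M := by
    apply Nat.le_floor
    push_cast
    push_cast at hdsq
    linarith
  have hcond : ∀ k, k ∈ Finset.Icc p M → (1 ≤ k ∧ 2*k ≤ d) := by
    intro k hk
    rw [Finset.mem_Icc] at hk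
    omega
  have hrw : (p:ℝ)^(-(1/2:ℝ)) = (√(p:ℝ))⁻¹ := by
    rw [Real.sqrt_eq_rpow]
    exact Real.rpow_neg hp0.le _
  constructor
  · -- LOWER BOUND
    rw [hrw]
    have hsub : Finset.Icc p (2*p) ⊆ Finset.Icc p M := Finset.Icc_subset_Icc_right hpM
    have hmono : ∑ k ∈ Finset.Icc p (2*p), (Nsph d k : ℝ) * nuNT d k
        ≤ ∑ k ∈ Finset.Icc p M, (Nsph d k : ℝ) * nuNT d k := by
      apply Finset.sum_le_sum_of_subset_of_nonneg hsub
      intro k hk _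
      obtain ⟨h1, h2⟩ := hcond k hk
      have := (term_bounds d k h1 h2).1
      have hpos : (0:ℝ) < (1/16) * ((k:ℝ)*√k)⁻¹ := by
        have : (0:ℝ) < k := by exact_mod_cast h1
        positivity
      linarith
    have hstep : ∑ k ∈ Finset.Icc p (2*p), (1/16:ℝ) * ((k:ℝ)*√k)⁻¹
        ≤ ∑ k ∈ Finset.Icc p (2*p), (Nsph d k : ℝ) * nuNT d k := by
      apply Finset.sum_le_sum
      intro k hk
      have hk' : k ∈ Finset.Icc p M := hsub hk
      obtain ⟨h1, h2⟩ := hcond k hk'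
      exact (term_bounds d k h1 h2).1
    have hfac : ∑ k ∈ Finset.Icc p (2*p), (1/16:ℝ) * ((k:ℝ)*√k)⁻¹
        = (1/16:ℝ) * ∑ k ∈ Finset.Icc p (2*p), ((k:ℝ)*√k)⁻¹ := by
      rw [Finset.mul_sum]
    have hlb := sum_lb p hp1
    calc (1/64:ℝ) * (√(p:ℝ))⁻¹ = (1/16:ℝ) * ((1/4)*(√(p:ℝ))⁻¹) := by ring
      _ ≤ (1/16:ℝ) * ∑ k ∈ Finset.Icc p (2*p), ((k:ℝ)*√k)⁻¹ := by
          apply mul_le_mul_of_nonneg_left hlb (by norm_num)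
      _ = ∑ k ∈ Finset.Icc p (2*p), (1/16:ℝ) * ((k:ℝ)*√k)⁻¹ := hfac.symm
      _ ≤ ∑ k ∈ Finset.Icc p (2*p), (Nsph d k : ℝ) * nuNT d k := hstep
      _ ≤ ∑ k ∈ Finset.Icc p M, (Nsph d k : ℝ) * nuNT d k := hmono
  · -- UPPER BOUND
    rw [hrw]
    have hstep : ∑ k ∈ Finset.Icc p M, (Nsph d k : ℝ) * nuNT d k
        ≤ ∑ k ∈ Finset.Icc p M, (3:ℝ) * ((k:ℝ)*√k)⁻¹ := by
      apply Finset.sum_le_sum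
      intro k hk
      obtain ⟨h1, h2⟩ := hcond k hk
      exact (term_bounds d k h1 h2).2
    have hfac : ∑ k ∈ Finset.Icc p M, (3:ℝ) * ((k:ℝ)*√k)⁻¹
        = (3:ℝ) * ∑ k ∈ Finset.Icc p M, ((k:ℝ)*√k)⁻¹ := by
      rw [Finset.mul_sum]
    calc ∑ k ∈ Finset.Icc p M, (Nsph d k : ℝ) * nuNT d k
        ≤ (3:ℝ) * ∑ k ∈ Finset.Icc p M, ((k:ℝ)*√k)⁻¹ := by rw [← hfac]; exact hstep
      _ ≤ (3:ℝ) * (6*(√(p:ℝ))⁻¹) := by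
          apply mul_le_mul_of_nonneg_left (sum_ub p hp1 M) (by norm_num)
      _ = 18 * (√(p:ℝ))⁻¹ := by ring
end

section
/- There exist an absolute constant C > 0 and an absolute constant D such that for every integer d ≥ D: Σ_{k ≥ ⌈d^(1.01)⌉} N(d,k) · ν_d(k) ≤ C · d^(−0.51), where the sum is over all integers k ≥ d^(1.01). -/
open Real Filter

section AuxProofs
open Nat

lemma stirling_upper (n : ℕ) (hn : 1 ≤ n) :
    (n ! : ℝ) ≤ Real.exp 1 * Real.sqrt n * ((n : ℝ) / Real.exp 1) ^ n := by
  obtain ⟨m, rfl⟩ := Nat.exists_eq_add_of_le' hn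
  have h := Stirling.stirlingSeq'_antitone (Nat.zero_le m)
  simp only [Function.comp] at h
  have h1 : Stirling.stirlingSeq (m + 1) ≤ Stirling.stirlingSeq 1 := by
    simpa using h
  rw [Stirling.stirlingSeq_one] at h1
  have hpos : (0:ℝ) < Real.sqrt (2 * (m + 1 : ℕ) : ℝ) * (((m + 1 : ℕ) : ℝ) / Real.exp 1) ^ (m + 1) := by
    positivity
  rw [Stirling.stirlingSeq, div_le_iff₀ hpos] at h1
  calc ((m+1)! : ℝ) ≤ Real.exp 1 / Real.sqrt 2 * (Real.sqrt (2 * (m + 1 : ℕ) : ℝ) * (((m+1:ℕ):ℝ) / Real.exp 1) ^ (m+1)) := h1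
    _ = Real.exp 1 * Real.sqrt (m+1:ℕ) * (((m+1:ℕ):ℝ) / Real.exp 1) ^ (m+1) := by
        rw [Real.sqrt_mul (by norm_num)]
        have h2 : Real.sqrt 2 ≠ 0 := by positivity
        field_simp

lemma stirling_lower (n : ℕ) (hn : 1 ≤ n) :
    Real.sqrt π * (Real.sqrt (2 * n) * ((n : ℝ) / Real.exp 1) ^ n) ≤ (n ! : ℝ) := by
  obtain ⟨m, rfl⟩ := Nat.exists_eq_add_of_le' hn
  have h : Real.sqrt π ≤ Stirling.stirlingSeq (m + 1) := by
    have := Stirling.stirlingSeq'_antitone.le_of_tendsto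
      (Stirling.tendsto_stirlingSeq_sqrt_pi.comp (tendsto_add_atTop_nat 1)) m
    simpa [Function.comp, Nat.add_comm] using this
  have hpos : (0:ℝ) < Real.sqrt (2 * (m + 1 : ℕ) : ℝ) * (((m + 1 : ℕ) : ℝ) / Real.exp 1) ^ (m + 1) := by
    positivity
  rw [Stirling.stirlingSeq, le_div_iff₀ hpos] at h
  linarith [h]

lemma choose_bound (d k : ℕ) (hd : 1 ≤ d) (hk : 1 ≤ k) :
    ((k + d).choose d : ℝ) ≤ Real.exp 1 / (2 * π) *
      (Real.sqrt ((k:ℝ) + d) / (Real.sqrt k * Real.sqrt d)) *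
      (((k : ℝ) + d) ^ (k + d) / ((k : ℝ) ^ k * (d : ℝ) ^ d)) := by
  have hkf : (0:ℝ) < (k ! : ℝ) := by positivity
  have hdf : (0:ℝ) < (d ! : ℝ) := by positivity
  have hch : ((k + d).choose d : ℝ) = ((k+d)! : ℝ) / ((k ! : ℝ) * (d ! : ℝ)) := by
    rw [eq_div_iff (by positivity)]
    exact_mod_cast congrArg (Nat.cast (R := ℝ))
      (by rw [← mul_assoc]; exact Nat.add_choose_mul_factorial_mul_factorial k d)
  have hup := stirling_upper (k + d) (by omega)
  have hlk := stirling_lower k hk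
  have hld := stirling_lower d hd
  have hπ : (0:ℝ) < π := Real.pi_pos
  have hsπ : (0:ℝ) < Real.sqrt π := Real.sqrt_pos.mpr hπ
  have hkR : (0:ℝ) < (k:ℝ) := by exact_mod_cast hk
  have hdR : (0:ℝ) < (d:ℝ) := by exact_mod_cast hd
  have he : (0:ℝ) < Real.exp 1 := Real.exp_pos 1
  -- lower bounds on denominators
  have hlkpos : (0:ℝ) < Real.sqrt π * (Real.sqrt (2 * k) * ((k : ℝ) / Real.exp 1) ^ k) := by positivity
  have hldpos : (0:ℝ) < Real.sqrt π * (Real.sqrt (2 * d) * ((d : ℝ) / Real.exp 1) ^ d) := by positivity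
  have step : ((k + d).choose d : ℝ) ≤
      (Real.exp 1 * Real.sqrt ((k:ℝ)+d) * (((k:ℝ) + d) / Real.exp 1) ^ (k+d)) /
      ((Real.sqrt π * (Real.sqrt (2 * k) * ((k : ℝ) / Real.exp 1) ^ k)) *
       (Real.sqrt π * (Real.sqrt (2 * d) * ((d : ℝ) / Real.exp 1) ^ d))) := by
    rw [hch]
    apply div_le_div₀ (by positivity) ?_ (by positivity) (by nlinarith)
    · push_cast at hup ⊢; convert hup using 3 <;> push_cast <;> ring
  refine step.trans (le_of_eq ?_)
  have h2k : Real.sqrt (2 * (k:ℝ)) = Real.sqrt 2 * Real.sqrt (k:ℝ) := Real.sqrt_mul (by norm_num) _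
  have h2d : Real.sqrt (2 * (d:ℝ)) = Real.sqrt 2 * Real.sqrt (d:ℝ) := Real.sqrt_mul (by norm_num) _
  have hππ : Real.sqrt π * Real.sqrt π = π := Real.mul_self_sqrt hπ.le
  have h22 : Real.sqrt 2 * Real.sqrt 2 = 2 := Real.mul_self_sqrt (by norm_num)
  have hpowk : ((k : ℝ) / Real.exp 1) ^ k = (k:ℝ)^k / Real.exp 1 ^ k := div_pow _ _ _
  have hpowd : ((d : ℝ) / Real.exp 1) ^ d = (d:ℝ)^d / Real.exp 1 ^ d := div_pow _ _ _
  have hpown : (((k:ℝ) + d) / Real.exp 1) ^ (k+d) = ((k:ℝ)+d)^(k+d) / (Real.exp 1 ^ k * Real.exp 1 ^ d) :=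
    by rw [div_pow, ← pow_add]
  push_cast
  rw [hpowk, hpowd, hpown, h2k, h2d]
  have hek : (0:ℝ) < Real.exp 1 ^ k := by positivity
  have hed : (0:ℝ) < Real.exp 1 ^ d := by positivity
  have hsk : (0:ℝ) < Real.sqrt (k:ℝ) := Real.sqrt_pos.mpr hkR
  have hsd : (0:ℝ) < Real.sqrt (d:ℝ) := Real.sqrt_pos.mpr hdR
  have hs2 : (0:ℝ) < Real.sqrt 2 := by positivity
  field_simp
  rw [show (2:ℝ) * π = (√π * √π) * (√2 * √2) by rw [hππ, h22]; ring]
  ring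

lemma Nsph_eq (d k : ℕ) (hk : 2 ≤ k) (hd : 1 ≤ d) :
    (if k = 0 then 1
      else (k + d).choose k - (if 2 ≤ k then (k + d - 2).choose (k - 2) else 0))
      = (k + d - 1).choose (d - 1) + (k + d - 2).choose (d - 1) := by
  obtain ⟨m, rfl⟩ : ∃ m, k = m + 2 := ⟨k - 2, by omega⟩
  obtain ⟨e, rfl⟩ : ∃ e, d = e + 1 := ⟨d - 1, by omega⟩
  simp only [if_pos hk, if_neg (by omega : ¬ m + 2 = 0)]
  have h1 : (m + 2 + (e + 1)).choose (m + 2) = (m + 1 + (e + 1)).choose (m + 1) + (m + 1 + (e + 1)).choose (m + 2) := by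
    have := Nat.choose_succ_succ (m + 1 + (e + 1)) (m + 1)
    convert this using 2 <;> omega
  have h2 : (m + 1 + (e + 1)).choose (m + 1) = (m + (e + 1)).choose m + (m + (e + 1)).choose (m + 1) := by
    have := Nat.choose_succ_succ (m + (e + 1)) m
    convert this using 2 <;> omega
  have e1 : m + 2 + (e + 1) - 2 = m + (e + 1) := by omega
  have e1' : m + 2 + (e + 1) - 1 = m + 1 + (e + 1) := by omega
  have e2 : m + 2 - 2 = m := by omega
  have e3 : e + 1 - 1 = e := by omega
  rw [e1, e1', e2, e3, h1, h2]
  have h3 : (m + 1 + (e + 1)).choose (m + 2) = (m + 1 + (e + 1)).choose e := by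
    rw [← Nat.choose_symm (show m + 2 ≤ m + 1 + (e + 1) by omega)]
    congr 1; omega
  have h4 : (m + (e + 1)).choose (m + 1) = (m + (e + 1)).choose e := by
    rw [← Nat.choose_symm (show m + 1 ≤ m + (e + 1) by omega)]
    congr 1; omega
  omega

lemma Nsph_le (d k : ℕ) (hk : 2 ≤ k) (hd : 1 ≤ d) :
    (k + d) * Nsph d k ≤ 2 * d * (k + d).choose d := by
  unfold Nsph
  rw [Nsph_eq d k hk hd]
  have mono : (k + d - 2).choose (d - 1) ≤ (k + d - 1).choose (d - 1) :=
    Nat.choose_le_choose _ (by omega)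
  have key : (k + d) * (k + d - 1).choose (d - 1) = (k + d).choose d * d := by
    have := Nat.add_one_mul_choose_eq (k + d - 1) (d - 1)
    rw [show k+d-1+1 = k + d by omega, show d-1+1 = d by omega] at this
    exact this
  calc (k + d) * ((k + d - 1).choose (d - 1) + (k + d - 2).choose (d - 1))
      ≤ (k + d) * (2 * (k + d - 1).choose (d - 1)) := by
        apply Nat.mul_le_mul_left; omega
    _ = 2 * ((k + d) * (k + d - 1).choose (d - 1)) := by ring
    _ = 2 * d * (k + d).choose d := by rw [key]; ring

lemma nuNT_nonneg (d k : ℕ) : 0 ≤ nuNT d k := by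
  unfold nuNT; positivity

lemma term_bound (d k : ℕ) (hd : 1 ≤ d) (hk2 : 2 ≤ k) (hdk : d ≤ k) :
    (Nsph d k : ℝ) * nuNT d k ≤ 3 * Real.exp 1 / π * Real.sqrt d / (k:ℝ)^2 := by
  have hx0 : (0:ℝ) < (k:ℝ) := by exact_mod_cast by omega
  have hy0 : (0:ℝ) < (d:ℝ) := by exact_mod_cast hd
  have hx1 : (1:ℝ) ≤ (k:ℝ) := by exact_mod_cast by omega
  have hyx : (d:ℝ) ≤ (k:ℝ) := by exact_mod_cast hdk
  have hn0 : (0:ℝ) < (k:ℝ) + (d:ℝ) := by linarith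
  have hπ : (0:ℝ) < π := Real.pi_pos
  have he : (0:ℝ) < Real.exp 1 := Real.exp_pos 1
  have hsk0 : (0:ℝ) < Real.sqrt k := Real.sqrt_pos.mpr hx0
  have hsd0 : (0:ℝ) < Real.sqrt d := Real.sqrt_pos.mpr hy0
  have hsn0 : (0:ℝ) < Real.sqrt ((k:ℝ) + d) := Real.sqrt_pos.mpr hn0
  -- rewrite nuNT with natural powers
  have hnu : nuNT d k = (d:ℝ)^d * (k:ℝ)^k * ((k:ℝ)^2 + (k:ℝ)*(d:ℝ) + (d:ℝ)) /
      ((k:ℝ)^2 * ((k:ℝ) + (d:ℝ))^(k+d+1)) := by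
    unfold nuNT
    rw [show ((k:ℝ)) - 2 = ((k:ℕ):ℝ) - ((2:ℕ):ℝ) by norm_num]
    rw [Real.rpow_sub hx0, Real.rpow_natCast, Real.rpow_natCast, Real.rpow_natCast]
    rw [show -((k:ℝ) + (d:ℝ) + 1) = -(((k+d+1 : ℕ)):ℝ) by push_cast; ring]
    rw [Real.rpow_neg hn0.le, Real.rpow_natCast]
    field_simp
  -- N bound
  have hN : (Nsph d k : ℝ) ≤ 2 * (d:ℝ) * ((k+d).choose d : ℝ) / ((k:ℝ) + (d:ℝ)) := by
    rw [le_div_iff₀ hn0]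
    have := Nsph_le d k hk2 hd
    have h2 : ((k+d) * Nsph d k : ℕ) ≤ (2 * d * (k+d).choose d : ℕ) := this
    calc (Nsph d k : ℝ) * ((k:ℝ) + (d:ℝ)) = (((k+d) * Nsph d k : ℕ) : ℝ) := by push_cast; ring
      _ ≤ ((2 * d * (k+d).choose d : ℕ) : ℝ) := by exact_mod_cast h2
      _ = 2 * (d:ℝ) * ((k+d).choose d : ℝ) := by push_cast; ring
  have hCnd := choose_bound d k hd (by omega)
  have hnn : 0 ≤ nuNT d k := nuNT_nonneg d k
  set A : ℝ := Real.exp 1 / (2 * π) with hA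
  have hA0 : 0 < A := by positivity
  set S : ℝ := (k:ℝ)^2 + (k:ℝ)*(d:ℝ) + (d:ℝ) with hS
  have hS0 : 0 < S := by positivity
  set C' : ℝ := A * (Real.sqrt ((k:ℝ) + d) / (Real.sqrt k * Real.sqrt d)) *
      (((k : ℝ) + d) ^ (k + d) / ((k : ℝ) ^ k * (d : ℝ) ^ d)) with hC'
  have step1 : (Nsph d k : ℝ) * nuNT d k ≤ (2 * (d:ℝ) * C' / ((k:ℝ) + (d:ℝ))) * nuNT d k := by
    apply mul_le_mul_of_nonneg_right _ hnn
    refine hN.trans ?_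
    gcongr
  have heq : (2 * (d:ℝ) * C' / ((k:ℝ) + (d:ℝ))) * nuNT d k =
      2 * A * (d:ℝ) * Real.sqrt ((k:ℝ)+d) * S /
        (Real.sqrt k * Real.sqrt d * (k:ℝ)^2 * ((k:ℝ)+(d:ℝ))^2) := by
    rw [hnu, hC', pow_succ]
    have h1 : ((k:ℝ))^k ≠ 0 := by positivity
    have h2 : ((d:ℝ))^d ≠ 0 := by positivity
    have h3 : (((k:ℝ)+(d:ℝ)))^(k+d) ≠ 0 := by positivity
    field_simp
    ring
  -- final comparison
  have hsk2 : Real.sqrt k ^ 2 = (k:ℝ) := Real.sq_sqrt hx0.le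
  have hsn2 : Real.sqrt ((k:ℝ)+d) ^ 2 = (k:ℝ)+(d:ℝ) := Real.sq_sqrt hn0.le
  have hsd2 : Real.sqrt d * Real.sqrt d = (d:ℝ) := Real.mul_self_sqrt hy0.le
  have hskn : Real.sqrt k ≤ Real.sqrt ((k:ℝ)+d) := Real.sqrt_le_sqrt (by linarith)
  have hkey : Real.sqrt ((k:ℝ)+d) * S ≤ 3 * Real.sqrt k * ((k:ℝ)+(d:ℝ))^2 := by
    have hSle : S ≤ 3 * (k:ℝ)^2 := by rw [hS]; nlinarith
    have h5 : Real.sqrt k ^ 4 * Real.sqrt ((k:ℝ)+d) ≤ Real.sqrt k * Real.sqrt ((k:ℝ)+d) ^ 4 := by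
      have h6 := mul_le_mul_of_nonneg_left (pow_le_pow_left₀ hsk0.le hskn 3)
        (mul_nonneg hsk0.le hsn0.le)
      calc Real.sqrt k ^ 4 * Real.sqrt ((k:ℝ)+d)
          = Real.sqrt k * Real.sqrt ((k:ℝ)+d) * Real.sqrt k ^ 3 := by ring
        _ ≤ Real.sqrt k * Real.sqrt ((k:ℝ)+d) * Real.sqrt ((k:ℝ)+d) ^ 3 := h6
        _ = Real.sqrt k * Real.sqrt ((k:ℝ)+d) ^ 4 := by ring
    have hk4 : (k:ℝ)^2 = Real.sqrt k ^ 4 := by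
      linear_combination (-(Real.sqrt (k:ℝ) ^ 2 + (k:ℝ))) * hsk2
    have hn4 : ((k:ℝ)+(d:ℝ))^2 = Real.sqrt ((k:ℝ)+d) ^ 4 := by
      linear_combination (-(Real.sqrt ((k:ℝ)+(d:ℝ)) ^ 2 + ((k:ℝ)+(d:ℝ)))) * hsn2
    calc Real.sqrt ((k:ℝ)+d) * S ≤ Real.sqrt ((k:ℝ)+d) * (3 * (k:ℝ)^2) :=
          mul_le_mul_of_nonneg_left hSle hsn0.le
      _ = 3 * (Real.sqrt k ^ 4 * Real.sqrt ((k:ℝ)+d)) := by rw [hk4]; ring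
      _ ≤ 3 * (Real.sqrt k * Real.sqrt ((k:ℝ)+d) ^ 4) := by linarith
      _ = 3 * Real.sqrt k * ((k:ℝ)+(d:ℝ))^2 := by rw [hn4]; ring
  have final : 2 * A * (d:ℝ) * Real.sqrt ((k:ℝ)+d) * S /
        (Real.sqrt k * Real.sqrt d * (k:ℝ)^2 * ((k:ℝ)+(d:ℝ))^2)
      ≤ 3 * Real.exp 1 / π * Real.sqrt d / (k:ℝ)^2 := by
    rw [div_le_div_iff₀ (by positivity) (by positivity)]
    have e1 : 2 * A * (d:ℝ) * Real.sqrt ((k:ℝ)+d) * S * (k:ℝ)^2 =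
        (Real.exp 1 / π) * ((k:ℝ)^2 * (d:ℝ)) * (Real.sqrt ((k:ℝ)+d) * S) := by
      rw [hA]; field_simp
    have e2 : (Real.exp 1 / π) * ((k:ℝ)^2 * (d:ℝ)) * (3 * Real.sqrt k * ((k:ℝ)+(d:ℝ))^2) =
        3 * Real.exp 1 / π * Real.sqrt d *
          (Real.sqrt k * Real.sqrt d * (k:ℝ)^2 * ((k:ℝ)+(d:ℝ))^2) := by
      linear_combination (-(3 * Real.exp 1 / π * (k:ℝ)^2 * Real.sqrt k * ((k:ℝ)+(d:ℝ))^2)) * hsd2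
    rw [e1, ← e2]
    gcongr
  calc (Nsph d k : ℝ) * nuNT d k ≤ (2 * (d:ℝ) * C' / ((k:ℝ) + (d:ℝ))) * nuNT d k := step1
    _ = _ := heq
    _ ≤ _ := final

end AuxProofs

/-- An absolute constant C > 0 and D such that for all d ≥ D, the tail sum over all
integers k ≥ d^1.01 of N(d,k)·ν_d(k) is at most C·d^(−0.51). -/

theorem tail_sum_Nsph_mul_nuNT_le :
    ∃ C : ℝ, 0 < C ∧ ∃ D : ℕ, ∀ d : ℕ, D ≤ d →
      ∑' k : ℕ, (Nsph d (⌈(d : ℝ) ^ (1.01 : ℝ)⌉₊ + k) : ℝ) *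
          nuNT d (⌈(d : ℝ) ^ (1.01 : ℝ)⌉₊ + k) ≤
        C * (d : ℝ) ^ (-(0.51 : ℝ)) := by
  have hπ : (0:ℝ) < π := Real.pi_pos
  refine ⟨6 * Real.exp 1 / π, by positivity, 2, fun d hd => ?_⟩
  set K : ℕ := ⌈(d : ℝ) ^ (1.01 : ℝ)⌉₊ with hK
  have hd0 : (0:ℝ) < (d:ℝ) := by exact_mod_cast by omega
  have hd1 : (1:ℝ) ≤ (d:ℝ) := by exact_mod_cast by omega
  have hd2 : (2:ℝ) ≤ (d:ℝ) := by exact_mod_cast hd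
  have hKr : (d : ℝ) ^ (1.01 : ℝ) ≤ (K:ℝ) := Nat.le_ceil _
  have hdKr : (d:ℝ) ≤ (d : ℝ) ^ (1.01 : ℝ) := by
    calc (d:ℝ) = (d:ℝ) ^ (1:ℝ) := (Real.rpow_one _).symm
      _ ≤ (d : ℝ) ^ (1.01 : ℝ) := Real.rpow_le_rpow_of_exponent_le hd1 (by norm_num)
  have hdK : d ≤ K := by exact_mod_cast (hdKr.trans hKr)
  have hK2 : 2 ≤ K := le_trans hd hdK
  have hK0 : (0:ℝ) < (K:ℝ) := by exact_mod_cast by omega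
  set B : ℝ := 3 * Real.exp 1 / π * Real.sqrt d with hB
  have hB0 : 0 ≤ B := by positivity
  apply Real.tsum_le_of_sum_range_le
    (fun n => mul_nonneg (by positivity) (nuNT_nonneg _ _))
  intro n
  set g : ℕ → ℝ := fun j => ((K:ℝ) - 1 + j)⁻¹ with hg
  have hterm : ∀ j : ℕ, (Nsph d (K + j) : ℝ) * nuNT d (K + j) ≤ B * (g j - g (j+1)) := by
    intro j
    have hj0 : (0:ℝ) ≤ (j:ℝ) := Nat.cast_nonneg j
    have hKR : (2:ℝ) ≤ (K:ℝ) := by exact_mod_cast hK2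
    have ha : (0:ℝ) < (K:ℝ) - 1 + j := by linarith
    have hb : (0:ℝ) < (K:ℝ) + j := by linarith
    have hgj : g j - g (j+1) = 1 / (((K:ℝ) - 1 + j) * ((K:ℝ) + j)) := by
      simp only [hg]
      push_cast
      rw [show (K:ℝ) - 1 + ((j:ℝ) + 1) = (K:ℝ) + j by ring]
      rw [inv_sub_inv ha.ne' hb.ne']
      congr 1
      ring
    have h1 : (Nsph d (K + j) : ℝ) * nuNT d (K + j) ≤ B / ((K + j : ℕ):ℝ)^2 :=
      term_bound d (K + j) (by omega) (by omega) (by omega)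
    refine h1.trans ?_
    rw [hgj, mul_one_div]
    apply div_le_div_of_nonneg_left hB0 (by positivity)
    push_cast
    nlinarith
  have hsum : ∑ j ∈ Finset.range n, (Nsph d (K + j) : ℝ) * nuNT d (K + j)
      ≤ B * (g 0 - g n) := by
    calc ∑ j ∈ Finset.range n, (Nsph d (K + j) : ℝ) * nuNT d (K + j)
        ≤ ∑ j ∈ Finset.range n, B * (g j - g (j+1)) :=
          Finset.sum_le_sum (fun j _ => hterm j)
      _ = B * ∑ j ∈ Finset.range n, (g j - g (j+1)) := by rw [Finset.mul_sum]
      _ = B * (g 0 - g n) := by rw [Finset.sum_range_sub' g n]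
  have hg0 : g 0 - g n ≤ 2 / (K:ℝ) := by
    have hKR : (2:ℝ) ≤ (K:ℝ) := by exact_mod_cast hK2
    have hn0 : (0:ℝ) ≤ (n:ℝ) := Nat.cast_nonneg n
    have hgn : (0:ℝ) ≤ g n := by
      show (0:ℝ) ≤ ((K:ℝ) - 1 + n)⁻¹
      apply inv_nonneg.mpr
      linarith
    have hg00 : g 0 ≤ 2 / (K:ℝ) := by
      show ((K:ℝ) - 1 + (0:ℕ))⁻¹ ≤ 2 / (K:ℝ)
      rw [Nat.cast_zero, add_zero, inv_eq_one_div,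
        div_le_div_iff₀ (by linarith) (by linarith)]
      linarith
    linarith
  refine hsum.trans ?_
  have h2 : B * (g 0 - g n) ≤ B * (2 / (K:ℝ)) := by
    apply mul_le_mul_of_nonneg_left hg0 hB0
  refine h2.trans ?_
  -- B * (2/K) ≤ 6e/π * d^(-0.51)
  have hsq : Real.sqrt d = (d:ℝ) ^ (0.5:ℝ) := by
    rw [Real.sqrt_eq_rpow]; norm_num
  have hKinv : 1 / (K:ℝ) ≤ ((d:ℝ) ^ (1.01:ℝ))⁻¹ := by
    rw [one_div]
    apply inv_anti₀ (by positivity) hKr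
  calc B * (2 / (K:ℝ)) = (6 * Real.exp 1 / π) * (Real.sqrt d * (1 / (K:ℝ))) := by
        rw [hB]; ring
    _ ≤ (6 * Real.exp 1 / π) * (Real.sqrt d * ((d:ℝ) ^ (1.01:ℝ))⁻¹) := by
        apply mul_le_mul_of_nonneg_left _ (by positivity)
        exact mul_le_mul_of_nonneg_left hKinv (Real.sqrt_nonneg _)
    _ = (6 * Real.exp 1 / π) * (d:ℝ) ^ (-(0.51:ℝ)) := by
        rw [hsq, ← Real.rpow_neg hd0.le, ← Real.rpow_add hd0]
        norm_num
end
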